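/- Let D be an n×n real diagonal matrix and A an n×n symmetric entrywise-nonnegative matrix. Then D - A is positive definite if and only if there exists a strictly positive vector v ∈ ℝⁿ such that (D - A)v is strictly positive (every entry positive). -/

import Mathlib

open Matrix

lemma aux_back (n : ℕ) (M : Matrix (Fin n) (Fin n) ℝ) (hsymm : M.IsSymm)
    (hoff : ∀ i j, i ≠ j → M i j ≤ 0) (v : Fin n → ℝ) (hv : ∀ i, 0 < v i)
    (hMv : ∀ i, 0 < (M *ᵥ v) i) : M.PosDef := by
  refine posDef_iff_dotProduct_mulVec.mpr ⟨hsymm, fun x hx => ?_⟩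
  have hquad : x ⬝ᵥ (M *ᵥ x) = ∑ i, ∑ j, x i * M i j * x j := by
    simp [dotProduct, mulVec, Finset.mul_sum, mul_assoc]
  set G : Fin n → Fin n → ℝ :=
    fun i j => x i * M i j * x j - x i ^ 2 / v i * (M i j * v j) with hG
  have hterm : ∀ i j, 0 ≤ G i j + G j i := by
    intro i j
    have hvi : v i ≠ 0 := (hv i).ne'
    have hvj : v j ≠ 0 := (hv j).ne'
    rcases eq_or_ne i j with rfl | hne
    · have h0 : G i i + G i i = 0 := by
        simp only [hG]; field_simp; ring
      rw [h0]
    · have ha : M i j ≤ 0 := hoff i j hne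
      have hji : M j i = M i j := by
        have := hsymm; rw [Matrix.IsSymm] at this
        calc M j i = Mᵀ i j := rfl
          _ = M i j := by rw [this]
      have key : G i j + G j i = (-(M i j)) * ((x i * v j - x j * v i)^2 / (v i * v j)) := by
        simp only [hG, hji]
        field_simp
        ring
      rw [key]
      exact mul_nonneg (neg_nonneg.mpr ha) (div_nonneg (sq_nonneg _) (mul_pos (hv i) (hv j)).le)
  have hsum2 : (0:ℝ) ≤ ∑ i, ∑ j, (G i j + G j i) :=
    Finset.sum_nonneg fun i _ => Finset.sum_nonneg fun j _ => hterm i j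
  have hswap : ∑ i, ∑ j, G j i = ∑ i, ∑ j, G i j := Finset.sum_comm
  have hsum : (0:ℝ) ≤ ∑ i, ∑ j, G i j := by
    have : ∑ i, ∑ j, (G i j + G j i) = (∑ i, ∑ j, G i j) + (∑ i, ∑ j, G j i) := by
      simp [Finset.sum_add_distrib]
    rw [this, hswap] at hsum2; linarith
  have hexpand : ∑ i, ∑ j, G i j
      = (∑ i, ∑ j, x i * M i j * x j) - ∑ i, x i ^ 2 / v i * (M *ᵥ v) i := by
    simp [hG, Finset.sum_sub_distrib, mulVec, dotProduct, Finset.mul_sum]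
  have hpos : 0 < ∑ i, x i ^ 2 / v i * (M *ᵥ v) i := by
    obtain ⟨k, hk⟩ := Function.ne_iff.mp hx
    refine Finset.sum_pos' (fun i _ => ?_) ⟨k, Finset.mem_univ k, ?_⟩
    · have := (hv i); have := hMv i; positivity
    · have hk' : x k ≠ 0 := by simpa using hk
      have := hv k; have := hMv k; positivity
  have : 0 < x ⬝ᵥ (M *ᵥ x) := by rw [hquad]; rw [hexpand] at hsum; linarith
  simpa using this


lemma aux_fwd (n : ℕ) (M : Matrix (Fin n) (Fin n) ℝ)
    (hoff : ∀ i j, i ≠ j → M i j ≤ 0) (hpd : M.PosDef) :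
    ∃ v : Fin n → ℝ, (∀ i, 0 < v i) ∧ ∀ i, 0 < (M *ᵥ v) i := by
  have hdet : IsUnit M.det := isUnit_iff_ne_zero.mpr hpd.det_pos.ne'
  set v₀ : Fin n → ℝ := M⁻¹ *ᵥ (fun _ => 1) with hv₀
  have hMv₀ : M *ᵥ v₀ = fun _ => 1 := by
    rw [hv₀, mulVec_mulVec, Matrix.mul_nonsing_inv M hdet, one_mulVec]
  -- v₀ is entrywise nonnegative
  set p : Fin n → ℝ := fun i => max (-(v₀ i)) 0 with hp
  set q : Fin n → ℝ := fun i => max (v₀ i) 0 with hq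
  have hpq : q - p = v₀ := by
    funext i; simp [hp, hq, max_zero_sub_max_neg_zero_eq_self]
  have hp_nonneg : ∀ i, 0 ≤ p i := fun i => le_max_right _ _
  have hq_nonneg : ∀ i, 0 ≤ q i := fun i => le_max_right _ _
  have hpq0 : ∀ i, p i * q i = 0 := by
    intro i
    rcases le_total (v₀ i) 0 with h | h
    · simp [hp, hq, max_eq_right h, mul_comm]
    · simp [hp, hq, max_eq_right (neg_nonpos_of_nonneg h)]
  have hp0 : p = 0 := by
    by_contra hne
    have hquad := (posDef_iff_dotProduct_mulVec.mp hpd).2 hne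
    have h1 : p ⬝ᵥ (M *ᵥ v₀) = ∑ i, p i := by
      rw [hMv₀]; simp [dotProduct]
    have h2 : p ⬝ᵥ (M *ᵥ q) ≤ 0 := by
      rw [dotProduct_mulVec]
      refine Finset.sum_nonpos fun j _ => ?_
      have : (p ᵥ* M) j = ∑ i, p i * M i j := rfl
      rw [this, Finset.sum_mul]
      refine Finset.sum_nonpos fun i _ => ?_
      rcases eq_or_ne i j with rfl | hne'
      · have h0 : p i * M i i * q i = M i i * (p i * q i) := by ring
        rw [h0, hpq0 i, mul_zero]
      · nlinarith [hoff i j hne', mul_nonneg (hp_nonneg i) (hq_nonneg j)]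
    have h3 : p ⬝ᵥ (M *ᵥ p) ≤ 0 := by
      have : M *ᵥ v₀ = M *ᵥ q - M *ᵥ p := by rw [← hpq, mulVec_sub]
      have hdp : p ⬝ᵥ (M *ᵥ v₀) = p ⬝ᵥ (M *ᵥ q) - p ⬝ᵥ (M *ᵥ p) := by
        rw [this, dotProduct_sub]
      have hsum : 0 ≤ ∑ i, p i := Finset.sum_nonneg fun i _ => hp_nonneg i
      rw [h1] at hdp; linarith
    have : (0:ℝ) < p ⬝ᵥ (M *ᵥ p) := by simpa using hquad
    linarith
  have hv₀_nonneg : ∀ i, 0 ≤ v₀ i := by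
    intro i
    have : p i = 0 := by rw [hp0]; rfl
    simp only [hp] at this
    have := le_of_max_le_left (le_of_eq this)
    linarith
  -- perturb
  set C : ℝ := ∑ i, ∑ j, |M i j| with hC
  have hC0 : 0 ≤ C := Finset.sum_nonneg fun i _ => Finset.sum_nonneg fun j _ => abs_nonneg _
  set ε : ℝ := 1 / (1 + C) with hε
  have hε0 : 0 < ε := by positivity
  refine ⟨fun i => v₀ i + ε, fun i => ?_, fun i => ?_⟩
  · have := hv₀_nonneg i; show 0 < v₀ i + ε; linarith
  have hsplit : (M *ᵥ fun i => v₀ i + ε) i = 1 + ε * (∑ j, M i j) := by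
    have : (fun i => v₀ i + ε) = v₀ + (fun _ => ε) := rfl
    rw [this, mulVec_add]
    have h1 : (M *ᵥ v₀) i = 1 := by rw [hMv₀]
    have h2 : (M *ᵥ fun _ => ε) i = ε * ∑ j, M i j := by
      simp only [mulVec, dotProduct]
      rw [Finset.mul_sum]
      exact Finset.sum_congr rfl fun j _ => mul_comm _ _
    simp [h1, h2]
  rw [hsplit]
  have hbound : |∑ j, M i j| ≤ C := by
    calc |∑ j, M i j| ≤ ∑ j, |M i j| := Finset.abs_sum_le_sum_abs _ _
      _ ≤ C := Finset.single_le_sum (f := fun i => ∑ j, |M i j|)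
          (fun i _ => Finset.sum_nonneg fun j _ => abs_nonneg _) (Finset.mem_univ i)
  have : ε * |∑ j, M i j| ≤ ε * C := by nlinarith
  have h4 : ε * (∑ j, M i j) ≥ -(ε * C) := by
    have := neg_abs_le (∑ j, M i j)
    nlinarith
  have h5 : ε * C < 1 := by
    rw [hε]
    rw [div_mul_eq_mul_div, div_lt_one (by linarith)]
    linarith
  linarith

theorem stmt0 (n : ℕ) (hn : 0 < n)
    (D A : Matrix (Fin n) (Fin n) ℝ)
    (hD : D.IsDiag) (hA : A.IsSymm) (hA0 : ∀ i j, 0 ≤ A i j) :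
    (D - A).PosDef ↔
      ∃ v : Fin n → ℝ, (∀ i, 0 < v i) ∧ ∀ i, 0 < ((D - A) *ᵥ v) i := by
  have hoff : ∀ i j, i ≠ j → (D - A) i j ≤ 0 := by
    intro i j hij
    have hD0 : D i j = 0 := hD hij
    have := hA0 i j
    simp [Matrix.sub_apply, hD0]
    linarith
  have hsymm : (D - A).IsSymm := by
    rw [Matrix.IsSymm, transpose_sub, hD.isSymm, hA]
  constructor
  · intro hpd
    exact aux_fwd n (D - A) hoff hpd
  · rintro ⟨v, hv, hMv⟩
    exact aux_back n (D - A) hsymm hoff v hv hMv
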